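/- If 𝔰 < 𝔟, then 𝔰 = 𝔰_{ω,ω}. More precisely: if ⟨e_α : α < κ⟩ is a splitting family of size κ < 𝔟, then it is (ω,ω)-splitting. -/

import Mathlib

open Set

def Splits (x a : Set ℕ) : Prop := (a ∩ x).Infinite ∧ (a \ x).Infinite

def SplittingFamily (F : Set (Set ℕ)) : Prop :=
  ∀ a : Set ℕ, a.Infinite → ∃ x ∈ F, Splits x a

def OmegaOmegaSplitting (F : Set (Set ℕ)) : Prop :=
  ∀ a : ℕ → Set ℕ, (∀ n, (a n).Infinite) →
    ∃ x ∈ F, {n | (a n ∩ x).Infinite}.Infinite ∧ {n | (a n \ x).Infinite}.Infinite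

noncomputable def sNum : Cardinal :=
  sInf {c | ∃ F : Set (Set ℕ), SplittingFamily F ∧ Cardinal.mk F = c}

noncomputable def sOmegaOmegaNum : Cardinal :=
  sInf {c | ∃ F : Set (Set ℕ), OmegaOmegaSplitting F ∧ Cardinal.mk F = c}

def ADFamily (A : Set (Set ℕ)) : Prop :=
  (∀ a ∈ A, a.Infinite) ∧ A.Pairwise fun a b => (a ∩ b).Finite

def MADFamily (A : Set (Set ℕ)) : Prop :=
  ADFamily A ∧ A.Infinite ∧ ∀ B, ADFamily B → A ⊆ B → A = B

noncomputable def aNum : Cardinal :=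
  sInf {c | ∃ A : Set (Set ℕ), MADFamily A ∧ Cardinal.mk A = c}

/-- The ideal generated by an a.d. family together with the finite sets:
`b ∈ adIdeal A` iff `b ⊆* a₀ ∪ ⋯ ∪ a_k` for finitely many members of `A`. -/
def adIdeal (A : Set (Set ℕ)) : Set (Set ℕ) :=
  {b | ∃ S : Finset (Set ℕ), ↑S ⊆ A ∧ (b \ ⋃ a ∈ S, a).Finite}

def CompSep (A : Set (Set ℕ)) : Prop :=
  ∀ b : Set ℕ, b ∉ adIdeal A → ∃ a ∈ A, a ⊆ b

noncomputable def bNum : Cardinal :=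
  sInf {c | ∃ F : Set (ℕ → ℕ),
    (∀ g : ℕ → ℕ, ∃ f ∈ F, {n | g n < f n}.Infinite) ∧ Cardinal.mk F = c}

def BlockSplitting (F : Set (Set ℕ)) : Prop :=
  ∀ s : ℕ → Finset ℕ, (∀ n, (s n).Nonempty) →
    (Pairwise fun m n => Disjoint (s m) (s n)) →
    (⋃ n, (s n : Set ℕ)) = Set.univ →
    ∃ x ∈ F, {n | (s n : Set ℕ) ⊆ x}.Infinite ∧ {n | (s n : Set ℕ) ∩ x = ∅}.Infinite

/-- `sel x false = x = x⁰`, `sel x true = xᶜ = x¹`. -/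
def sel (x : Set ℕ) : Bool → Set ℕ
  | false => x
  | true => xᶜ

/-- An element of `2^{<κ}`: a binary sequence of some length `dom < κ`. -/
structure PNode (κ : Ordinal) where
  dom : Ordinal
  dom_lt : dom < κ
  val : ∀ ξ : Ordinal, ξ < dom → Bool

/-- End-extension of nodes. -/
def PNode.Ext {κ : Ordinal} (σ τ : PNode κ) : Prop :=
  ∃ h : σ.dom ≤ τ.dom, ∀ ξ (hξ : ξ < σ.dom), σ.val ξ hξ = τ.val ξ (lt_of_lt_of_le hξ h)

/-- If `⟨e i : i ∈ ι⟩` is a splitting family of size `< 𝔟`, then it is (ω,ω)-splitting;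
consequently `𝔰 < 𝔟 → 𝔰 = 𝔰_{ω,ω}`. -/
lemma exists_splits (a : Set ℕ) (ha : a.Infinite) : ∃ x, Splits x a := by
  have hpa : {m | m ∈ a}.Infinite := ha
  have hinj := Nat.nth_injective hpa
  have hmem := Nat.nth_mem_of_infinite hpa
  refine ⟨Set.range (fun k => Nat.nth (· ∈ a) (2 * k)), ?_, ?_⟩
  · refine Set.Infinite.mono ?_
      (Set.infinite_range_of_injective (f := fun k => Nat.nth (· ∈ a) (2 * k)) ?_)
    · rintro m ⟨k, rfl⟩
      exact ⟨hmem (2 * k), ⟨k, rfl⟩⟩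
    · intro k1 k2 h; have := hinj h; omega
  · refine Set.Infinite.mono ?_
      (Set.infinite_range_of_injective (f := fun k => Nat.nth (· ∈ a) (2 * k + 1)) ?_)
    · rintro m ⟨k, rfl⟩
      refine ⟨hmem (2 * k + 1), ?_⟩
      rintro ⟨j, hj⟩
      have := hinj hj; omega
    · intro k1 k2 h; have := hinj h; omega

lemma key (ι : Type) (e : ι → Set ℕ) (hlt : Cardinal.mk ι < bNum)
    (hsp : SplittingFamily (Set.range e)) : OmegaOmegaSplitting (Set.range e) := by
  classical
  intro a ha
  by_contra hcon
  push_neg at hcon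
  have hbad : ∀ i : ι, {n | (a n ∩ e i).Infinite}.Finite ∨ {n | (a n \ e i).Infinite}.Finite := by
    intro i
    rcases Set.finite_or_infinite {n | (a n ∩ e i).Infinite} with h | h
    · exact Or.inl h
    · exact Or.inr (hcon (e i) ⟨i, rfl⟩ h)
  set f : ι → ℕ → ℕ := fun i n =>
    (if (a n ∩ e i).Finite then sSup (a n ∩ e i) else 0)
    ⊔ (if (a n \ e i).Finite then sSup (a n \ e i) else 0) with hf
  have hg : ∃ g : ℕ → ℕ, ∀ i, {n | g n < f i n}.Finite := by
    by_contra hng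
    push_neg at hng
    have hmem : Cardinal.mk (Set.range f) ∈ {c | ∃ F : Set (ℕ → ℕ),
        (∀ g : ℕ → ℕ, ∃ h ∈ F, {n | g n < h n}.Infinite) ∧ Cardinal.mk F = c} := by
      refine ⟨Set.range f, fun g => ?_, rfl⟩
      obtain ⟨i, hi⟩ := hng g
      exact ⟨f i, ⟨i, rfl⟩, hi⟩
    have h1 : bNum ≤ Cardinal.mk (Set.range f) := csInf_le' hmem
    exact absurd ((Cardinal.mk_range_le).trans_lt hlt) (not_lt.2 h1)
  obtain ⟨g, hgf⟩ := hg
  have hex : ∀ (m n : ℕ), ∃ k ∈ a n, m < k := fun m n => (ha n).exists_gt m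
  choose Fc hFmem hFgt using hex
  set x : ℕ → ℕ := fun n =>
    Nat.rec (Fc (g 0) 0) (fun k xk => Fc (max xk (g (k + 1))) (k + 1)) n with hxdef
  have hxa : ∀ n, x n ∈ a n := by
    intro n; cases n with
    | zero => exact hFmem (g 0) 0
    | succ k => exact hFmem _ _
  have hxg : ∀ n, g n < x n := by
    intro n; cases n with
    | zero => exact hFgt (g 0) 0
    | succ k => exact lt_of_le_of_lt (le_max_right _ _) (hFgt _ _)
  have hxmono : StrictMono x :=
    strictMono_nat_of_lt_succ (fun k => lt_of_le_of_lt (le_max_left _ _) (hFgt _ _))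
  set b : Set ℕ := Set.range x with hb
  have hbinf : b.Infinite := Set.infinite_range_of_injective hxmono.injective
  obtain ⟨y, ⟨i, rfl⟩, hsy⟩ := hsp b hbinf
  rcases hbad i with hB | hB
  · have hfin : (b ∩ e i).Finite := by
      obtain ⟨N1, hN1⟩ := (hB.union (hgf i)).bddAbove
      refine Set.Finite.subset ((Set.finite_Iic N1).image x) ?_
      rintro z ⟨⟨n, rfl⟩, hz⟩
      refine ⟨n, ?_, rfl⟩
      by_contra hn
      have hn' : N1 < n := not_le.1 (fun h => hn h)
      have hn1 : ¬(a n ∩ e i).Infinite := fun h =>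
        absurd (hN1 (Set.mem_union_left _ h)) (by omega)
      have hn2 : f i n ≤ g n := not_lt.1 fun h =>
        absurd (hN1 (Set.mem_union_right _ h)) (by omega)
      have hfin' : (a n ∩ e i).Finite := Set.not_infinite.1 hn1
      have h1 : x n ≤ sSup (a n ∩ e i) := le_csSup hfin'.bddAbove ⟨hxa n, hz⟩
      have h2 : sSup (a n ∩ e i) ≤ f i n := by
        simp only [hf, if_pos hfin']
        exact le_max_left _ _
      have := hxg n
      omega
    exact hsy.1 hfin
  · have hfin : (b \ e i).Finite := by
      obtain ⟨N1, hN1⟩ := (hB.union (hgf i)).bddAbove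
      refine Set.Finite.subset ((Set.finite_Iic N1).image x) ?_
      rintro z ⟨⟨n, rfl⟩, hz⟩
      refine ⟨n, ?_, rfl⟩
      by_contra hn
      have hn' : N1 < n := not_le.1 (fun h => hn h)
      have hn1 : ¬(a n \ e i).Infinite := fun h =>
        absurd (hN1 (Set.mem_union_left _ h)) (by omega)
      have hn2 : f i n ≤ g n := not_lt.1 fun h =>
        absurd (hN1 (Set.mem_union_right _ h)) (by omega)
      have hfin' : (a n \ e i).Finite := Set.not_infinite.1 hn1
      have h1 : x n ≤ sSup (a n \ e i) := le_csSup hfin'.bddAbove ⟨hxa n, hz⟩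
      have h2 : sSup (a n \ e i) ≤ f i n := by
        simp only [hf, if_pos hfin']
        exact le_max_right _ _
      have := hxg n
      omega
    exact hsy.2 hfin

theorem stmt1 :
    (∀ (ι : Type) (e : ι → Set ℕ), Cardinal.mk ι < bNum →
      SplittingFamily (Set.range e) → OmegaOmegaSplitting (Set.range e)) ∧
    (sNum < bNum → sNum = sOmegaOmegaNum) := by
  constructor
  · exact key
  · intro hlt
    have hSne : {c | ∃ F : Set (Set ℕ), SplittingFamily F ∧ Cardinal.mk F = c}.Nonempty := by
      refine ⟨_, Set.univ, fun a ha => ?_, rfl⟩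
      obtain ⟨x, hx⟩ := exists_splits a ha
      exact ⟨x, trivial, hx⟩
    obtain ⟨F, hF, hFc⟩ := csInf_mem hSne
    have hrange : Set.range (fun z : ↥F => (z : Set ℕ)) = F := Subtype.range_coe
    have hOm : OmegaOmegaSplitting F := by
      have := key ↥F (fun z => (z : Set ℕ))
        (by rw [show Cardinal.mk ↥F = sNum from hFc]; exact hlt)
        (by rw [hrange]; exact hF)
      rwa [hrange] at this
    have h1 : sOmegaOmegaNum ≤ sNum := csInf_le' ⟨F, hOm, hFc⟩
    have hS'ne : {c | ∃ F : Set (Set ℕ), OmegaOmegaSplitting F ∧ Cardinal.mk F = c}.Nonempty :=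
      ⟨_, F, hOm, rfl⟩
    obtain ⟨G, hG, hGc⟩ := csInf_mem hS'ne
    have hGsp : SplittingFamily G := by
      intro a ha
      obtain ⟨x, hxG, h1', h2'⟩ := hG (fun _ => a) (fun _ => ha)
      obtain ⟨n, hn⟩ := h1'.nonempty
      obtain ⟨m, hm⟩ := h2'.nonempty
      exact ⟨x, hxG, hn, hm⟩
    have h2 : sNum ≤ sOmegaOmegaNum :=
      le_of_le_of_eq (csInf_le' ⟨G, hGsp, rfl⟩) hGc
    exact le_antisymm h2 h1
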